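/- Let D be odd, B ∈ S_D with |B| < (D−1)/2, E = 𝔼_B, and η_D = e_1 + e_3 + ... + e_D. If J ⊆ [1,D] is an interval with e_J ∈ E + 𝔽η_D, then J ∈ B. -/

import Mathlib

open Finset

abbrev Vec := ℕ →₀ ZMod 2

/-- The basis vector `e_i`. -/
noncomputable def e (i : ℕ) : Vec := Finsupp.single i 1

/-- For an interval `p = (a,b)` (representing `[a,b]`), the vector `e_I = ∑_{i∈[a,b]} e_i`. -/
noncomputable def eI (p : ℕ × ℕ) : Vec := ∑ j ∈ Finset.Icc p.1 p.2, e j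

/-- The map `ξ_i` on intervals. -/
def tint (i : ℕ) (p : ℕ × ℕ) : ℕ × ℕ :=
  if i ≤ p.1 then (p.1 + 2, p.2 + 2)
  else if p.2 + 2 ≤ i then p
  else (p.1, p.2 + 2)

/-- The map `t_i` on sets of intervals: `t_i(B') = ξ_i(B') ∪ {[i,i]}`. -/
def tmap (i : ℕ) (B : Finset (ℕ × ℕ)) : Finset (ℕ × ℕ) :=
  B.image (tint i) ∪ {(i, i)}

/-- The inductively defined family `S_D`. -/
inductive IsS : ℕ → Finset (ℕ × ℕ) → Prop
  | empty (D : ℕ) : IsS D ∅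
  | one : IsS 1 {(1, 1)}
  | step (D i : ℕ) (B' : Finset (ℕ × ℕ)) (h1 : 1 ≤ i) (h2 : i ≤ D + 2)
      (h : IsS D B') : IsS (D + 2) (tmap i B')

def primEven (D k : ℕ) : Finset (ℕ × ℕ) := (Finset.Icc 1 k).image fun j => (j, D + 1 - j)
def primOddA (D k : ℕ) : Finset (ℕ × ℕ) := (Finset.Icc 1 k).image fun j => (j, D - j)
def primOddB (D k : ℕ) : Finset (ℕ × ℕ) := (Finset.Icc 1 k).image fun j => (j + 1, D + 1 - j)

/-- The primitive elements of `𝕊_D`. -/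
def IsPrim (D : ℕ) (B : Finset (ℕ × ℕ)) : Prop :=
  B = ∅ ∨
  (Even D ∧ ∃ k, 1 ≤ k ∧ k ≤ D / 2 ∧ B = primEven D k) ∨
  (Odd D ∧ ∃ k, Odd k ∧ 1 ≤ k ∧ k ≤ (D - 1) / 2 ∧ (B = primOddA D k ∨ B = primOddB D k))

/-- The inductively defined family `𝕊_D`. -/
inductive IsSS : ℕ → Finset (ℕ × ℕ) → Prop
  | prim (D : ℕ) (B : Finset (ℕ × ℕ)) : IsPrim D B → IsSS D B
  | one : IsSS 1 {(1, 1)}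
  | step (D i : ℕ) (B' : Finset (ℕ × ℕ)) (h1 : 1 ≤ i) (h2 : i ≤ D + 2)
      (h : IsSS D B') : IsSS (D + 2) (tmap i B')

/-- The subspace `𝔼_B` spanned by the `e_I`, `I ∈ B`. -/
noncomputable def EB (B : Finset (ℕ × ℕ)) : Submodule (ZMod 2) Vec :=
  Submodule.span (ZMod 2) (eI '' (B : Set (ℕ × ℕ)))

/-- Two intervals are non-touching. -/
def Nontouch (p q : ℕ × ℕ) : Prop := p.2 + 2 ≤ q.1 ∨ q.2 + 2 ≤ p.1

/-- `p ≺ q`: `p = [a,b]` is strictly nested inside `q = [a',b']`, i.e. `a' < a ≤ b < b'`. -/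
def Nested (p q : ℕ × ℕ) : Prop := q.1 < p.1 ∧ p.1 ≤ p.2 ∧ p.2 < q.2

/-- `η_D = e_1 + e_3 + ⋯ + e_D` (`D` odd). -/
noncomputable def eta (D : ℕ) : Vec := ∑ j ∈ (Finset.Icc 1 D).filter (fun j => j % 2 = 1), e j

noncomputable def Tfun (i k : ℕ) : Vec :=
  if k + 1 < i then e k
  else if k + 1 = i then e k + e (k + 1) + e (k + 2)
  else e (k + 2)

/-- The linear map `T_i : V_{D-2} → V_D`. -/
noncomputable def Tlin (i : ℕ) : Vec →ₗ[ZMod 2] Vec :=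
  Finsupp.linearCombination (ZMod 2) (Tfun i)

/-- The inductively defined family `𝒻(V_D)` of subspaces. -/
inductive IsF : ℕ → Submodule (ZMod 2) Vec → Prop
  | zero (D : ℕ) : IsF D ⊥
  | one : IsF 1 (Submodule.span (ZMod 2) {e 1})
  | step (D i : ℕ) (E' : Submodule (ZMod 2) Vec) (h1 : 1 ≤ i) (h2 : i ≤ D + 2)
      (h : IsF D E') :
      IsF (D + 2) (Submodule.map (Tlin i) E' ⊔ Submodule.span (ZMod 2) {e i})

/-- The subspace `V_D = ⟨e_1,…,e_D⟩`. -/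
noncomputable def VD (D : ℕ) : Submodule (ZMod 2) Vec :=
  Submodule.span (ZMod 2) (e '' Set.Icc 1 D)

/-- The symplectic form with `(e_i,e_j) = 1` iff `|i-j| = 1`. -/
noncomputable def symp (x y : Vec) : ZMod 2 :=
  x.sum fun i xi => xi * (y (i + 1) + if 1 ≤ i then y (i - 1) else 0)


-- evaluation lemmas
lemma e_apply (i j : ℕ) : e i j = if i = j then 1 else 0 := Finsupp.single_apply

lemma eI_apply (p : ℕ × ℕ) (j : ℕ) :
    eI p j = if p.1 ≤ j ∧ j ≤ p.2 then 1 else 0 := by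
  rw [eI, Finsupp.finset_sum_apply]
  rw [Finset.sum_congr rfl (fun k _ => e_apply k j), Finset.sum_ite_eq' (Finset.Icc p.1 p.2) j (fun _ => (1:ZMod 2))]
  simp [Finset.mem_Icc]

lemma eta_apply (D j : ℕ) : eta D j = if 1 ≤ j ∧ j ≤ D ∧ j % 2 = 1 then 1 else 0 := by
  rw [eta, Finsupp.finset_sum_apply]
  rw [Finset.sum_congr rfl (fun k _ => e_apply k j),
    Finset.sum_ite_eq' ((Finset.Icc 1 D).filter (fun j => j % 2 = 1)) j (fun _ => (1:ZMod 2))]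
  simp [Finset.mem_Icc, and_assoc]

lemma sum_eI_apply (S : Finset (ℕ × ℕ)) (j : ℕ) :
    (∑ p ∈ S, eI p) j = ∑ p ∈ S, (if p.1 ≤ j ∧ j ≤ p.2 then (1 : ZMod 2) else 0) := by
  rw [Finsupp.finset_sum_apply]
  exact Finset.sum_congr rfl fun p _ => eI_apply p j

lemma isS_bounds {D : ℕ} {B : Finset (ℕ × ℕ)} (h : IsS D B) :
    ∀ p ∈ B, 1 ≤ p.1 ∧ p.1 ≤ p.2 ∧ p.2 ≤ D := by
  induction h with
  | empty D => simp
  | one => intro p hp; simp at hp; subst hp; simp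
  | step D i B' h1 h2 h ih =>
    intro p hp
    simp only [tmap, Finset.mem_union, Finset.mem_image, Finset.mem_singleton] at hp
    rcases hp with ⟨q, hq, rfl⟩ | rfl
    · have := ih q hq
      simp only [tint]
      split_ifs <;> (try simp) <;> omega
    · simp; omega

lemma isS_laminar {D : ℕ} {B : Finset (ℕ × ℕ)} (h : IsS D B) :
    ∀ p ∈ B, ∀ q ∈ B, p = q ∨ Nontouch p q ∨ Nested p q ∨ Nested q p := by
  induction h with
  | empty D => simp
  | one => intro p hp q hq; simp at hp hq; subst hp; subst hq; left; rfl
  | step D i B' h1 h2 h ih =>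
    intro p hp q hq
    simp only [tmap, Finset.mem_union, Finset.mem_image, Finset.mem_singleton] at hp hq
    rcases hp with ⟨p', hp', rfl⟩ | rfl <;> rcases hq with ⟨q', hq', rfl⟩ | rfl
    · rcases ih p' hp' q' hq' with rfl | hl | hl | hl
      · left; rfl
      all_goals {
        obtain ⟨b1, b2, b3⟩ := isS_bounds h p' hp'
        obtain ⟨c1, c2, c3⟩ := isS_bounds h q' hq'
        simp only [tint, Nontouch, Nested] at hl ⊢
        split_ifs <;> simp_all <;> omega }
    · obtain ⟨b1, b2, b3⟩ := isS_bounds h p' hp'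
      simp only [tint, Nontouch, Nested]
      split_ifs <;> simp_all <;> omega
    · obtain ⟨b1, b2, b3⟩ := isS_bounds h q' hq'
      simp only [tint, Nontouch, Nested]
      split_ifs <;> simp_all <;> omega
    · left; rfl

lemma tmap_card {D : ℕ} {B' : Finset (ℕ × ℕ)} (h : IsS D B') (i : ℕ) :
    (tmap i B').card = B'.card + 1 := by
  rw [tmap, Finset.card_union_of_disjoint, Finset.card_image_of_injOn, Finset.card_singleton]
  · intro p hp q hq heq
    obtain ⟨b1, b2, b3⟩ := isS_bounds h p (by simpa using hp)
    obtain ⟨c1, c2, c3⟩ := isS_bounds h q (by simpa using hq)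
    simp only [tint] at heq
    split_ifs at heq <;> simp_all [Prod.ext_iff] <;> omega
  · simp only [Finset.disjoint_singleton_right, Finset.mem_image, not_exists]
    rintro p ⟨hp, heq⟩
    simp only [tint] at heq
    split_ifs at heq <;> simp_all [Prod.ext_iff] <;> omega

lemma isS_triple {D : ℕ} {B : Finset (ℕ × ℕ)} (h : IsS D B) (hc : B.card < (D - 1) / 2) :
    ∃ x y z : ℕ, 1 ≤ x ∧ x < y ∧ y < z ∧ z ≤ D ∧ x % 2 = 1 ∧ y % 2 = 0 ∧ z % 2 = 1 ∧
      (∀ p ∈ B, ¬(p.1 ≤ x ∧ x ≤ p.2)) ∧ (∀ p ∈ B, ¬(p.1 ≤ y ∧ y ≤ p.2)) ∧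
      (∀ p ∈ B, ¬(p.1 ≤ z ∧ z ≤ p.2)) := by
  induction h with
  | empty D =>
    refine ⟨1, 2, 3, ?_, ?_, ?_, ?_, ?_, ?_, ?_, ?_, ?_, ?_⟩ <;> (try simp) <;> omega
  | one => simp at hc
  | step D i B' h1 h2 h ih =>
    rw [tmap_card h i] at hc
    obtain ⟨x, y, z, e1, e2, e3, e4, e5, e6, e7, hx, hy, hz⟩ := ih (by omega)
    have key : ∀ j : ℕ, j ≤ D → (∀ p ∈ B', ¬(p.1 ≤ j ∧ j ≤ p.2)) →
        ∀ p ∈ tmap i B', ¬(p.1 ≤ (if j < i then j else j + 2) ∧ (if j < i then j else j + 2) ≤ p.2) := by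
      intro j hj havoid p hp
      simp only [tmap, Finset.mem_union, Finset.mem_image, Finset.mem_singleton] at hp
      rcases hp with ⟨q, hq, rfl⟩ | rfl
      · have := havoid q hq
        obtain ⟨b1, b2, b3⟩ := isS_bounds h q hq
        simp only [tint]
        split_ifs <;> simp <;> omega
      · simp; split_ifs <;> omega
    refine ⟨if x < i then x else x + 2, if y < i then y else y + 2, if z < i then z else z + 2,
      ?_, ?_, ?_, ?_, ?_, ?_, ?_, key x (by omega) hx, key y (by omega) hy, key z (by omega) hz⟩
      <;> split_ifs <;> omega

lemma mem_EB {B : Finset (ℕ × ℕ)} {v : Vec} (hv : v ∈ EB B) :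
    ∃ S ⊆ B, v = ∑ p ∈ S, eI p := by
  rw [EB, Finsupp.mem_span_image_iff_linearCombination] at hv
  obtain ⟨l, hl, rfl⟩ := hv
  refine ⟨l.support, ?_, ?_⟩
  · intro p hp
    exact_mod_cast hl hp
  · rw [Finsupp.linearCombination_apply, Finsupp.sum]
    refine Finset.sum_congr rfl fun p hp => ?_
    have : l p = 1 := by
      have h0 : l p ≠ 0 := Finsupp.mem_support_iff.mp hp
      revert h0; generalize l p = c; revert c; decide
    rw [this, one_smul]

lemma EB_support {B : Finset (ℕ × ℕ)} {v : Vec} (hv : v ∈ EB B) (j : ℕ)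
    (hj : ∀ p ∈ B, ¬(p.1 ≤ j ∧ j ≤ p.2)) : v j = 0 := by
  obtain ⟨S, hSB, rfl⟩ := mem_EB hv
  rw [sum_eI_apply]
  exact Finset.sum_eq_zero fun p hp => if_neg (hj p (hSB hp))

lemma sum_interval {B S : Finset (ℕ × ℕ)} (hSB : S ⊆ B)
    (hbd : ∀ p ∈ B, 1 ≤ p.1 ∧ p.1 ≤ p.2)
    (hlam : ∀ p ∈ B, ∀ q ∈ B, p = q ∨ Nontouch p q ∨ Nested p q ∨ Nested q p)
    (a b : ℕ) (h2 : a ≤ b)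
    (heq : eI (a, b) = ∑ p ∈ S, eI p) : (a, b) ∈ S := by
  have heval : ∀ j, (if a ≤ j ∧ j ≤ b then (1 : ZMod 2) else 0)
      = ∑ p ∈ S, (if p.1 ≤ j ∧ j ≤ p.2 then (1 : ZMod 2) else 0) := by
    intro j
    rw [← sum_eI_apply, ← heq, eI_apply]
  have hne : S.Nonempty := by
    by_contra hemp
    rw [Finset.not_nonempty_iff_eq_empty] at hemp
    have := heval a
    rw [hemp, Finset.sum_empty, if_pos ⟨le_refl a, h2⟩] at this
    exact one_ne_zero this
  obtain ⟨M, hM, hMmin⟩ := Finset.exists_min_image S Prod.fst hne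
  obtain ⟨N, hN, hNmax⟩ := Finset.exists_max_image S Prod.snd hne
  -- coverage of M.1 is exactly {M}
  have hMa : a ≤ M.1 ∧ M.1 ≤ b := by
    have h1 := heval M.1
    rw [Finset.sum_eq_single_of_mem M hM] at h1
    · by_contra hcon
      rw [if_neg hcon, if_pos ⟨le_refl M.1, (hbd M (hSB hM)).2⟩] at h1
      exact one_ne_zero h1.symm
    · intro q hq hqne
      refine if_neg fun ⟨hq1, hq2⟩ => ?_
      have hmin := hMmin q hq
      obtain ⟨qb1, qb2⟩ := hbd q (hSB hq)
      obtain ⟨mb1, mb2⟩ := hbd M (hSB hM)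
      rcases hlam q (hSB hq) M (hSB hM) with rfl | hl | hl | hl
      · exact hqne rfl
      all_goals simp only [Nontouch, Nested] at hl; omega
  have hNb : a ≤ N.2 ∧ N.2 ≤ b := by
    have h1 := heval N.2
    rw [Finset.sum_eq_single_of_mem N hN] at h1
    · by_contra hcon
      rw [if_neg hcon, if_pos ⟨(hbd N (hSB hN)).2, le_refl N.2⟩] at h1
      exact one_ne_zero h1.symm
    · intro q hq hqne
      refine if_neg fun ⟨hq1, hq2⟩ => ?_
      have hmax := hNmax q hq
      obtain ⟨qb1, qb2⟩ := hbd q (hSB hq)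
      obtain ⟨mb1, mb2⟩ := hbd N (hSB hN)
      rcases hlam q (hSB hq) N (hSB hN) with rfl | hl | hl | hl
      · exact hqne rfl
      all_goals simp only [Nontouch, Nested] at hl; omega
  -- M = N
  have hMN : M = N := by
    by_contra hne'
    rcases hlam M (hSB hM) N (hSB hN) with h' | h' | h' | h'
    · exact hne' h'
    · obtain ⟨mb1, mb2⟩ := hbd M (hSB hM)
      obtain ⟨nb1, nb2⟩ := hbd N (hSB hN)
      have hmin := hMmin N hN
      have : M.2 + 2 ≤ N.1 := by
        rcases h' with h' | h'
        · exact h'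
        · exfalso; omega
      -- j := M.2 + 1 is in [a,b] but uncovered
      have hj := heval (M.2 + 1)
      rw [Finset.sum_eq_zero, if_pos] at hj
      · exact one_ne_zero hj
      · constructor <;> omega
      · intro q hq
        refine if_neg fun ⟨hq1, hq2⟩ => ?_
        obtain ⟨qb1, qb2⟩ := hbd q (hSB hq)
        have hmin' := hMmin q hq
        rcases hlam q (hSB hq) M (hSB hM) with rfl | hl | hl | hl <;>
          simp only [Nontouch, Nested] at * <;> omega
    · simp only [Nested] at h'
      have := hMmin N hN; omega
    · simp only [Nested] at h'
      have := hNmax M hM; omega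
  -- every j outside [M.1, M.2] is uncovered, hence outside [a,b]
  have houter : ∀ j, ¬(M.1 ≤ j ∧ j ≤ M.2) → ¬(a ≤ j ∧ j ≤ b) := by
    intro j hj
    have h1 := heval j
    rw [Finset.sum_eq_zero] at h1
    · intro hab
      rw [if_pos hab] at h1
      exact one_ne_zero h1
    · intro q hq
      refine if_neg fun ⟨hq1, hq2⟩ => ?_
      obtain ⟨qb1, qb2⟩ := hbd q (hSB hq)
      obtain ⟨mb1, mb2⟩ := hbd M (hSB hM)
      have hmin' := hMmin q hq
      have hmax' := hNmax q hq
      rw [← hMN] at hmax'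
      rcases hlam q (hSB hq) M (hSB hM) with rfl | hl | hl | hl <;>
        simp only [Nontouch, Nested] at * <;> omega
  have hA : a = M.1 := by
    by_contra hne'
    rcases hMN ▸ hNb with ⟨n1, n2⟩
    rcases hMa with ⟨m1, m2⟩
    have := houter a
    omega
  have hB2 : b = M.2 := by
    by_contra hne'
    rcases hMN ▸ hNb with ⟨n1, n2⟩
    have := houter b
    omega
  have : (a, b) = M := by
    rw [hA, hB2]
  rw [this]; exact hM

/-- `D` odd, `B ∈ S_D`, `|B| < (D−1)/2`; if `J ⊆ [1,D]` is an interval with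
`e_J ∈ E + 𝔽η_D`, then `J ∈ B`. -/
theorem stmt12 (D : ℕ) (hD : Odd D) (B : Finset (ℕ × ℕ)) (hB : IsS D B)
    (hc : B.card < (D - 1) / 2) (a b : ℕ) (h1 : 1 ≤ a) (h2 : a ≤ b) (h3 : b ≤ D)
    (h : eI (a, b) ∈ EB B ⊔ Submodule.span (ZMod 2) {eta D}) :
    (a, b) ∈ B := by
  have hbd := isS_bounds hB
  have hlam := isS_laminar hB
  have hbd' : ∀ p ∈ B, 1 ≤ p.1 ∧ p.1 ≤ p.2 := fun p hp => ⟨(hbd p hp).1, (hbd p hp).2.1⟩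
  rw [Submodule.mem_sup] at h
  obtain ⟨u, hu, w, hw, huw⟩ := h
  rw [Submodule.mem_span_singleton] at hw
  obtain ⟨c, rfl⟩ := hw
  rcases (show ∀ c : ZMod 2, c = 0 ∨ c = 1 by decide) c with rfl | rfl
  · rw [zero_smul, add_zero] at huw
    obtain ⟨S, hSB, hsum⟩ := mem_EB (show eI (a, b) ∈ EB B from huw ▸ hu)
    exact hSB (sum_interval hSB hbd' hlam a b h2 hsum)
  · exfalso
    rw [one_smul] at huw
    obtain ⟨x, y, z, e1, e2, e3, e4, e5, e6, e7, hx, hy, hz⟩ := isS_triple hB hc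
    have hval : ∀ j, eI (a, b) j = u j + eta D j := by
      intro j; rw [← huw, Finsupp.add_apply]
    have hvx := hval x
    have hvy := hval y
    have hvz := hval z
    rw [EB_support hu x hx, eta_apply, if_pos ⟨e1, by omega, e5⟩, zero_add, eI_apply] at hvx
    rw [EB_support hu y hy, eta_apply, if_neg (by omega), zero_add, eI_apply] at hvy
    rw [EB_support hu z hz, eta_apply, if_pos ⟨by omega, e4, e7⟩, zero_add, eI_apply] at hvz
    have hxab : a ≤ x ∧ x ≤ b := by
      by_contra hcon; rw [if_neg hcon] at hvx; exact one_ne_zero hvx.symm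
    have hzab : a ≤ z ∧ z ≤ b := by
      by_contra hcon; rw [if_neg hcon] at hvz; exact one_ne_zero hvz.symm
    have hyab : ¬(a ≤ y ∧ y ≤ b) := by
      intro hcon; rw [if_pos hcon] at hvy; exact one_ne_zero hvy
    omega
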